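/- Consider a single arc as in the context. Then the exit time function T is monotonically increasing on [0,∞): for all 0 ≤ θ₁ ≤ θ₂ one has T(θ₁) ≤ T(θ₂). -/
import Mathlib


open MeasureTheory
open scoped Classical

noncomputable section

/-- Cumulative flow `F(θ) = ∫₀^θ f` (which vanishes for `θ < 0` whenever `f`
vanishes on negatives). -/
def Fcum (f : ℝ → ℝ) (θ : ℝ) : ℝ := ∫ ξ in (0:ℝ)..θ, f ξ

/-- The queue `z(θ) = F⁺(θ − τ) − F⁻(θ)`. -/
def queueLen (τ : ℝ) (fplus fminus : ℝ → ℝ) (θ : ℝ) : ℝ :=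
  Fcum fplus (θ - τ) - Fcum fminus θ

/-- A single arc of a feasible flow over time: transit time `τ ≥ 0`, outflow
capacity `ν > 0`, inflow rate `fplus` and outflow rate `fminus` (locally integrable,
bounded, nonnegative, vanishing on negative times) with `fminus ≤ ν`, nonnegative
queues, and a lower bound `ε > 0` for the outflow rate whenever the queue is
positive (so that the waiting time is well-defined). -/
structure Arc where
  τ : ℝ
  ν : ℝ
  ε : ℝ
  fplus : ℝ → ℝ
  fminus : ℝ → ℝ
  τ_nonneg : 0 ≤ τ
  ν_pos : 0 < ν
  ε_pos : 0 < ε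
  fplus_nonneg : ∀ θ, 0 ≤ fplus θ
  fminus_nonneg : ∀ θ, 0 ≤ fminus θ
  fplus_zero_neg : ∀ θ, θ < 0 → fplus θ = 0
  fminus_zero_neg : ∀ θ, θ < 0 → fminus θ = 0
  fplus_bdd : ∃ M, ∀ θ, fplus θ ≤ M
  fplus_li : LocallyIntegrable fplus
  fminus_li : LocallyIntegrable fminus
  fminus_le_cap : ∀ θ, fminus θ ≤ ν
  queue_nonneg : ∀ θ, 0 ≤ θ → 0 ≤ queueLen τ fplus fminus θ
  outflow_lb : ∀ θ, 0 < queueLen τ fplus fminus θ → ε ≤ fminus θ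

namespace Arc

/-- Cumulative inflow `F⁺`. -/
def Fplus (A : Arc) (θ : ℝ) : ℝ := Fcum A.fplus θ

/-- Cumulative outflow `F⁻`. -/
def Fminus (A : Arc) (θ : ℝ) : ℝ := Fcum A.fminus θ

/-- The queue `z`. -/
def z (A : Arc) (θ : ℝ) : ℝ := queueLen A.τ A.fplus A.fminus θ

/-- The waiting time `q(θ)`. -/
def q (A : Arc) (θ : ℝ) : ℝ :=
  sInf {q : ℝ | 0 ≤ q ∧
    (∫ ξ in (θ + A.τ)..(θ + A.τ + q), A.fminus ξ) = A.z (θ + A.τ)}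

/-- The exit time `T(θ) = θ + τ + q(θ)`. -/
def T (A : Arc) (θ : ℝ) : ℝ := θ + A.τ + A.q θ

end Arc

end


section AuxProof

open MeasureTheory Set

private lemma locInt_ii {f : ℝ → ℝ} (hf : LocallyIntegrable f) (a b : ℝ) :
    IntervalIntegrable f volume a b :=
  (hf.integrableOn_isCompact isCompact_uIcc).intervalIntegrable

private lemma Fcum_sub {f : ℝ → ℝ} (hf : LocallyIntegrable f) (a b : ℝ) :
    Fcum f b - Fcum f a = ∫ ξ in a..b, f ξ := by
  have h := intervalIntegral.integral_add_adjacent_intervals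
    (locInt_ii hf 0 a) (locInt_ii hf a b)
  unfold Fcum; linarith

private lemma Fcum_mono {f : ℝ → ℝ} (hf : LocallyIntegrable f)
    (hf0 : ∀ θ, 0 ≤ f θ) : Monotone (Fcum f) := by
  intro a b hab
  have h : (0:ℝ) ≤ ∫ ξ in a..b, f ξ :=
    intervalIntegral.integral_nonneg hab (fun u _ => hf0 u)
  have := Fcum_sub hf a b
  linarith

private lemma Fcum_cont {f : ℝ → ℝ} (hf : LocallyIntegrable f) :
    Continuous (Fcum f) :=
  intervalIntegral.continuous_primitive (fun a b => locInt_ii hf a b) 0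

/-- The cumulative outflow reaches the queue value: for `a ≥ 0` there is
`t ≥ a` with `F⁻ t - F⁻ a = z a`. -/
private lemma reach (A : Arc) {a : ℝ} (ha : 0 ≤ a) :
    ∃ t, a ≤ t ∧ Fcum A.fminus t - Fcum A.fminus a = A.z a := by
  have hc : 0 ≤ A.z a := A.queue_nonneg a ha
  set c := A.z a with hcdef
  -- Step 1: find t₀ ≥ a with F⁻ t₀ - F⁻ a ≥ c
  have step1 : ∃ t₀, a ≤ t₀ ∧ c ≤ Fcum A.fminus t₀ - Fcum A.fminus a := by
    by_contra hcon
    push_neg at hcon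
    have hc0 : 0 < c := by
      have := hcon a le_rfl
      linarith
    -- while the outflow hasn't reached c, the queue stays positive
    have hq : ∀ t, a ≤ t → A.ε ≤ A.fminus t := by
      intro t ht
      apply A.outflow_lb
      have hm : Fcum A.fplus (a - A.τ) ≤ Fcum A.fplus (t - A.τ) :=
        Fcum_mono A.fplus_li A.fplus_nonneg (by linarith)
      have hlt := hcon t ht
      have hz : A.z a = Fcum A.fplus (a - A.τ) - Fcum A.fminus a := rfl
      have hz' : A.z t = Fcum A.fplus (t - A.τ) - Fcum A.fminus t := rfl
      show 0 < A.z t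
      rw [hz']
      rw [hz] at hcdef
      linarith
    set s := c / A.ε with hs
    have hspos : 0 < s := div_pos hc0 A.ε_pos
    have hint : A.ε * s ≤ ∫ ξ in a..(a + s), A.fminus ξ := by
      have hmono := intervalIntegral.integral_mono_on (μ := volume)
        (f := fun _ => A.ε) (g := A.fminus) (by linarith : a ≤ a + s)
        (intervalIntegrable_const) (locInt_ii A.fminus_li a (a + s))
        (fun x hx => hq x hx.1)
      simpa [mul_comm] using hmono
    have heq : Fcum A.fminus (a + s) - Fcum A.fminus a = ∫ ξ in a..(a + s), A.fminus ξ :=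
      Fcum_sub A.fminus_li a (a + s)
    have hes : A.ε * s = c := by
      rw [hs, mul_comm, div_mul_cancel₀ c (ne_of_gt A.ε_pos)]
    have := hcon (a + s) (by linarith)
    linarith
  obtain ⟨t₀, ht₀a, ht₀⟩ := step1
  -- Step 2: intermediate value theorem
  have hcont : ContinuousOn (Fcum A.fminus) (Icc a t₀) :=
    (Fcum_cont A.fminus_li).continuousOn
  have hivt := intermediate_value_Icc ht₀a hcont
  have hmem : Fcum A.fminus a + c ∈ Icc (Fcum A.fminus a) (Fcum A.fminus t₀) :=
    ⟨by linarith, by linarith⟩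
  obtain ⟨t, hti, htv⟩ := hivt hmem
  exact ⟨t, hti.1, by linarith⟩

/-- Attainment: the infimum defining `q θ` is attained, for `θ ≥ 0`. -/
private lemma q_mem (A : Arc) {θ : ℝ} (hθ : 0 ≤ θ) :
    0 ≤ A.q θ ∧
      (∫ ξ in (θ + A.τ)..(θ + A.τ + A.q θ), A.fminus ξ) = A.z (θ + A.τ) := by
  set a := θ + A.τ with hadef
  have ha : 0 ≤ a := by have := A.τ_nonneg; simp [hadef]; linarith
  set S := {q : ℝ | 0 ≤ q ∧ (∫ ξ in a..(a + q), A.fminus ξ) = A.z a} with hS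
  have hSrw : S = Ici 0 ∩ (fun q => Fcum A.fminus (a + q) - Fcum A.fminus a) ⁻¹' {A.z a} := by
    ext q
    simp only [hS, mem_setOf_eq, mem_inter_iff, mem_Ici, mem_preimage, mem_singleton_iff]
    rw [← Fcum_sub A.fminus_li a (a + q)]
  have hclosed : IsClosed S := by
    rw [hSrw]
    exact isClosed_Ici.inter (isClosed_singleton.preimage
      (((Fcum_cont A.fminus_li).comp (continuous_const.add continuous_id)).sub continuous_const))
  have hbdd : BddBelow S := ⟨0, fun x hx => hx.1⟩
  have hne : S.Nonempty := by
    obtain ⟨t, hta, htv⟩ := reach A ha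
    refine ⟨t - a, by linarith, ?_⟩
    rw [← Fcum_sub A.fminus_li a (a + (t - a))]
    simpa using htv
  have hmem : sInf S ∈ S := hclosed.csInf_mem hne hbdd
  have hq : A.q θ = sInf S := rfl
  exact ⟨hq ▸ hmem.1, hq ▸ hmem.2⟩

end AuxProof

/-- **Monotonicity of the exit time.** For a single arc of a feasible flow over
time, the exit time function `T` is monotonically increasing on `[0,∞)`. -/
theorem arc_exit_time_monotone (A : Arc) (θ₁ θ₂ : ℝ)
    (h1 : 0 ≤ θ₁) (h12 : θ₁ ≤ θ₂) :
    A.T θ₁ ≤ A.T θ₂ := by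
  open MeasureTheory Set in
  have hτ := A.τ_nonneg
  have h2 : (0:ℝ) ≤ θ₂ := le_trans h1 h12
  obtain ⟨hq2nn, hq2⟩ := q_mem A h2
  set a₁ := θ₁ + A.τ with ha1
  set a₂ := θ₂ + A.τ with ha2
  -- F⁻(T θ₂) = F⁺ θ₂
  have hz2 : A.z a₂ = Fcum A.fplus θ₂ - Fcum A.fminus a₂ := by
    show Fcum A.fplus (a₂ - A.τ) - Fcum A.fminus a₂ = _
    have : a₂ - A.τ = θ₂ := by simp [ha2]
    rw [this]
  have hint2 : Fcum A.fminus (a₂ + A.q θ₂) - Fcum A.fminus a₂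
      = ∫ ξ in a₂..(a₂ + A.q θ₂), A.fminus ξ := Fcum_sub A.fminus_li _ _
  have hT2 : Fcum A.fminus (a₂ + A.q θ₂) = Fcum A.fplus θ₂ := by
    rw [hq2, hz2] at hint2; linarith
  -- bounds for the IVT
  have hFmono := Fcum_mono A.fplus_li A.fplus_nonneg h12
  have hz1 : 0 ≤ Fcum A.fplus θ₁ - Fcum A.fminus a₁ := by
    have h : 0 ≤ Fcum A.fplus (a₁ - A.τ) - Fcum A.fminus a₁ := A.queue_nonneg a₁ (by linarith)
    have he : a₁ - A.τ = θ₁ := by simp [ha1]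
    rw [he] at h; exact h
  have hle : a₁ ≤ a₂ + A.q θ₂ := by linarith
  have hFm1 : Fcum A.fminus a₁ ≤ Fcum A.fplus θ₁ := by linarith
  have hFm2 : Fcum A.fplus θ₁ ≤ Fcum A.fminus (a₂ + A.q θ₂) := by
    rw [hT2]; exact hFmono
  have hivt := intermediate_value_Icc hle (Fcum_cont A.fminus_li).continuousOn
  obtain ⟨t, hti, htv⟩ := hivt ⟨hFm1, hFm2⟩
  -- t - a₁ is in the defining set for q θ₁
  have hmemS : (t - a₁) ∈ {q : ℝ | 0 ≤ q ∧
      (∫ ξ in a₁..(a₁ + q), A.fminus ξ) = A.z a₁} := by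
    constructor
    · have := hti.1; linarith
    · rw [← Fcum_sub A.fminus_li a₁ (a₁ + (t - a₁))]
      have hz1' : A.z a₁ = Fcum A.fplus θ₁ - Fcum A.fminus a₁ := by
        show Fcum A.fplus (a₁ - A.τ) - Fcum A.fminus a₁ = _
        have : a₁ - A.τ = θ₁ := by rw [ha1]; ring
        rw [this]
      rw [hz1']
      have : a₁ + (t - a₁) = t := by ring
      rw [this, htv]
  have hq1le : A.q θ₁ ≤ t - a₁ := csInf_le ⟨0, fun x hx => hx.1⟩ hmemS
  have := hti.2
  show θ₁ + A.τ + A.q θ₁ ≤ θ₂ + A.τ + A.q θ₂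
  linarith
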